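/- Let G be a simple graph with nonempty vertex set. The canonical double cover G ⊗ K₂ is connected if and only if G is connected and G is not bipartite. -/

import Mathlib

/-- The canonical double cover `G ⊗ K₂` of a simple graph `G`: vertices are `V × Bool`,
and `(v, b)` is adjacent to `(w, c)` iff `v` is adjacent to `w` in `G` and `b ≠ c`. -/
def doubleCover {V : Type*} (G : SimpleGraph V) : SimpleGraph (V × Bool) where
  Adj x y := G.Adj x.1 y.1 ∧ x.2 ≠ y.2
  symm := ⟨fun _ _ h => ⟨G.adj_symm h.1, Ne.symm h.2⟩⟩
  loopless := ⟨fun _ h => h.2 rfl⟩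

private lemma dc_adj {V : Type*} {G : SimpleGraph V} {v w : V} {b c : Bool}
    (h1 : G.Adj v w) (h2 : b ≠ c) : (doubleCover G).Adj (v, b) (w, c) := ⟨h1, h2⟩

private lemma dc_adj_elim {V : Type*} {G : SimpleGraph V} {x y : V × Bool}
    (h : (doubleCover G).Adj x y) : G.Adj x.1 y.1 ∧ x.2 ≠ y.2 := h

private def dc_proj {V : Type*} (G : SimpleGraph V) : doubleCover G →g G where
  toFun := Prod.fst
  map_rel' := fun h => h.1

private lemma dc_lift {V : Type*} (G : SimpleGraph V) {v w : V} (p : G.Walk v w) :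
    ∀ b : Bool, ∃ c, (doubleCover G).Reachable (v, b) (w, c) := by
  induction p with
  | nil => exact fun b => ⟨b, .refl _⟩
  | cons h q ih =>
    intro b
    obtain ⟨c, hc⟩ := ih (!b)
    exact ⟨c, (SimpleGraph.Adj.reachable (dc_adj h (by simp))).trans hc⟩

private lemma dc_swap {V : Type*} (G : SimpleGraph V) {x y : V × Bool}
    (h : (doubleCover G).Reachable x y) :
    (doubleCover G).Reachable (x.1, !x.2) (y.1, !y.2) := by
  obtain ⟨p⟩ := h
  induction p with
  | nil => exact .refl _
  | cons h q ih =>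
    have h' := dc_adj_elim h
    exact (SimpleGraph.Adj.reachable (dc_adj h'.1 (by simpa using h'.2))).trans ih

private lemma dc_invariant {V : Type*} (G : SimpleGraph V) (f : V × Bool → Bool)
    (hf : ∀ x y, (doubleCover G).Adj x y → f x = f y) {x y : V × Bool}
    (h : (doubleCover G).Reachable x y) : f x = f y := by
  obtain ⟨p⟩ := h
  induction p with
  | nil => rfl
  | cons h q ih => exact (hf _ _ h).trans ih

/-- For a simple graph `G` with nonempty vertex set, the canonical double
cover `G ⊗ K₂` is connected iff `G` is connected and `G` is not bipartite. -/
theorem doubleCover_connected_iff {V : Type*} [Nonempty V] (G : SimpleGraph V) :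
    (doubleCover G).Connected ↔ G.Connected ∧ ¬ G.Colorable 2 := by
  classical
  constructor
  · rintro hconn
    refine ⟨⟨fun v w => ?_⟩, ?_⟩
    · have h := hconn.preconnected (v, false) (w, false)
      exact h.map (dc_proj G)
    · rintro ⟨C⟩
      set f : V × Bool → Bool := fun x => xor (decide (C x.1 = 0)) x.2 with hfdef
      have hf : ∀ x y, (doubleCover G).Adj x y → f x = f y := by
        rintro ⟨v, b⟩ ⟨w, c⟩ hadj
        obtain ⟨hadj, hne⟩ := dc_adj_elim hadj
        have h1 : C v ≠ C w := C.valid hadj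
        have h2 : decide (C v = 0) = !decide (C w = 0) := by
          revert h1; generalize C v = a; generalize C w = b'; revert a b'; decide
        simp only [hfdef, h2]
        rcases b with _ | _ <;> rcases c with _ | _ <;> simp_all
      have v := Classical.arbitrary V
      have := dc_invariant G f hf (hconn.preconnected (v, false) (v, true))
      simp [hfdef] at this
  · rintro ⟨hG, hcol⟩
    by_cases hboth : ∃ v : V, (doubleCover G).Reachable (v, false) (v, true)
    · obtain ⟨v, hv⟩ := hboth
      have key : ∀ z : V × Bool, (doubleCover G).Reachable (v, false) z := by
        rintro ⟨w, c⟩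
        obtain ⟨p⟩ := hG.preconnected v w
        obtain ⟨c', hc'⟩ := dc_lift G p false
        rcases eq_or_ne c' c with rfl | hne
        · exact hc'
        · have hv2 : (doubleCover G).Reachable (v, true) (v, false) := by
            simpa using dc_swap G hv
          have hswap : (doubleCover G).Reachable (v, true) (w, !c') := by
            simpa using dc_swap G hc'
          have hcc : (!c') = c := by
            rcases c' with _ | _ <;> rcases c with _ | _ <;> simp_all
          rw [hcc] at hswap
          exact hv.trans hswap
      exact ⟨fun x y => (key x).symm.trans (key y)⟩
    · exfalso
      push_neg at hboth
      apply hcol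
      have v := Classical.arbitrary V
      set c : V → Bool :=
        fun w => if (doubleCover G).Reachable (v, false) (w, true) then true else false
        with hcdef
      have hreach : ∀ w b, (doubleCover G).Reachable (v, false) (w, b) → c w = b := by
        intro w b hb
        rcases b with _ | _
        · have hnr : ¬ (doubleCover G).Reachable (v, false) (w, true) := by
            intro h
            exact hboth w (hb.symm.trans h)
          simp [hcdef, hnr]
        · simp [hcdef, hb]
      have hC : ∀ {a b : V}, G.Adj a b → c a ≠ c b := by
        intro a b hab
        obtain ⟨p⟩ := hG.preconnected v a
        obtain ⟨ba, hba⟩ := dc_lift G p false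
        have hca := hreach a ba hba
        have hcb := hreach b (!ba)
          (hba.trans (SimpleGraph.Adj.reachable (dc_adj hab (by simp))))
        rw [hca, hcb]
        simp
      have coloring : G.Coloring Bool := SimpleGraph.Coloring.mk c (fun hab => hC hab)
      have := coloring.colorable
      simpa using this
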